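/- Monotonicity of the thinning solution in the driving configuration: let μ, Φ : ℝ → [0, ∞) and let P ⊆ P′ be configurations. Then the thinning solution of (P, μ, Φ) is contained in the thinning solution of (P′, μ, Φ); in particular the counting functions satisfy H^{S(P)}(t) ≤ H^{S(P′)}(t) for all t ∈ [0, T]. -/

import Mathlib

open Finset MeasureTheory

/-- A configuration for horizon `T`: a finite set of marked points in `(0,T] × [0,∞)`
whose time coordinates are pairwise distinct. -/
def IsConfig (T : ℝ) (P : Finset (ℝ × ℝ)) : Prop :=
  (∀ p ∈ P, 0 < p.1 ∧ p.1 ≤ T ∧ 0 ≤ p.2) ∧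
    ∀ p ∈ P, ∀ q ∈ P, p.1 = q.1 → p = q

/-- The intensity `Λ^S(t) = μ(t) + ∑_{(s,σ) ∈ S, s < t} Φ(t − s)`. -/
noncomputable def intensity (μ Φ : ℝ → ℝ) (S : Finset (ℝ × ℝ)) (t : ℝ) : ℝ :=
  μ t + ∑ q ∈ S.filter (fun q => q.1 < t), Φ (t - q.1)

/-- `S` is a thinning solution for `(P, μ, Φ)`: `S ⊆ P` and a point `(t,θ)` of `P`
belongs to `S` iff `θ ≤ Λ^S(t)`. -/
noncomputable def IsThinningSolution (μ Φ : ℝ → ℝ) (P S : Finset (ℝ × ℝ)) : Prop :=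
  S ⊆ P ∧ ∀ p ∈ P, (p ∈ S ↔ p.2 ≤ intensity μ Φ S p.1)

/-- The counting function `H^S(t) = #{(s,σ) ∈ S : s ≤ t}`. -/
noncomputable def countFun (S : Finset (ℝ × ℝ)) (t : ℝ) : ℕ :=
  (S.filter (fun q => q.1 ≤ t)).card

lemma intensity_mono_aux (μ Φ : ℝ → ℝ) (hΦ : ∀ t, 0 ≤ Φ t)
    (S S' : Finset (ℝ × ℝ)) (t : ℝ)
    (h : ∀ q ∈ S, q.1 < t → q ∈ S') :
    intensity μ Φ S t ≤ intensity μ Φ S' t := by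
  unfold intensity
  apply add_le_add (le_refl _)
  apply Finset.sum_le_sum_of_subset_of_nonneg
  · intro q hq
    simp only [Finset.mem_filter] at hq ⊢
    exact ⟨h q hq.1 hq.2, hq.2⟩
  · intro q _ _
    exact hΦ _

/-- Monotonicity of the thinning solution in the driving configuration:
if `P ⊆ P'` then the thinning solution of `(P, μ, Φ)` is contained in the
thinning solution of `(P', μ, Φ)`, and the counting functions are ordered on
`[0, T]`. -/
theorem thinning_mono_config
    (T : ℝ) (hT : 0 < T)
    (μ Φ : ℝ → ℝ) (hμ : ∀ t, 0 ≤ μ t) (hΦ : ∀ t, 0 ≤ Φ t)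
    (P P' : Finset (ℝ × ℝ)) (hP : IsConfig T P) (hP' : IsConfig T P')
    (hPP' : P ⊆ P')
    (S S' : Finset (ℝ × ℝ))
    (hS : IsThinningSolution μ Φ P S)
    (hS' : IsThinningSolution μ Φ P' S') :
    S ⊆ S' ∧ ∀ t, 0 ≤ t → t ≤ T → countFun S t ≤ countFun S' t := by
  have key : ∀ n : ℕ, ∀ p ∈ S, (S.filter (fun q => q.1 < p.1)).card ≤ n → p ∈ S' := by
    intro n
    induction n with
    | zero =>
      intro p hp hcard
      have hempty : S.filter (fun q => q.1 < p.1) = ∅ :=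
        Finset.card_eq_zero.mp (Nat.le_zero.mp hcard)
      have hint : intensity μ Φ S p.1 ≤ intensity μ Φ S' p.1 := by
        apply intensity_mono_aux μ Φ hΦ
        intro q hq hlt
        have : q ∈ S.filter (fun q => q.1 < p.1) := Finset.mem_filter.mpr ⟨hq, hlt⟩
        rw [hempty] at this
        exact absurd this (Finset.notMem_empty q)
      have hθ : p.2 ≤ intensity μ Φ S p.1 := (hS.2 p (hS.1 hp)).mp hp
      exact (hS'.2 p (hPP' (hS.1 hp))).mpr (hθ.trans hint)
    | succ n ih =>
      intro p hp hcard
      have hint : intensity μ Φ S p.1 ≤ intensity μ Φ S' p.1 := by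
        apply intensity_mono_aux μ Φ hΦ
        intro q hq hlt
        apply ih q hq
        have hsub : S.filter (fun r => r.1 < q.1) ⊆ S.filter (fun r => r.1 < p.1) := by
          intro r hr
          simp only [Finset.mem_filter] at hr ⊢
          exact ⟨hr.1, hr.2.trans hlt⟩
        have hne : q ∈ S.filter (fun r => r.1 < p.1) := Finset.mem_filter.mpr ⟨hq, hlt⟩
        have hnotin : q ∉ S.filter (fun r => r.1 < q.1) := by
          simp
        have hlt' : (S.filter (fun r => r.1 < q.1)).card <
            (S.filter (fun r => r.1 < p.1)).card :=
          Finset.card_lt_card (Finset.ssubset_iff_of_subset hsub |>.mpr ⟨q, hne, hnotin⟩)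
        omega
      have hθ : p.2 ≤ intensity μ Φ S p.1 := (hS.2 p (hS.1 hp)).mp hp
      exact (hS'.2 p (hPP' (hS.1 hp))).mpr (hθ.trans hint)
  have hSS' : S ⊆ S' := fun p hp =>
    key (S.filter (fun q => q.1 < p.1)).card p hp le_rfl
  refine ⟨hSS', fun t _ _ => ?_⟩
  apply Finset.card_le_card
  intro q hq
  simp only [Finset.mem_filter] at hq ⊢
  exact ⟨hSS' hq.1, hq.2⟩
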